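/- Let K be a field with char K ∉ {2,3} and let a, b ∈ K with b ≠ 0 and a² ≠ 4b, so that E: y² = x(x² + ax + b) is an elliptic curve over K. Suppose Q = (u, v) ∈ E(K) satisfies 2Q = (0,0). Then u ≠ 0 and v ≠ 0, and setting e = v/u and f = u one has a = e² − 2f, b = f² and Q = (f, ef); in particular E equals the curve E_{e,f}: y² = x(x² + (e²−2f)x + f²) and Q has exact order 4. -/

import Mathlib

open WeierstrassCurve

/-- The Weierstrass curve `y² = x(x² + ax + b)`, i.e. `a₁ = a₃ = a₆ = 0`, `a₂ = a`,
`a₄ = b`. -/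
def Wab {K : Type*} [Field K] (a b : K) : WeierstrassCurve K :=
  { a₁ := 0, a₂ := a, a₃ := 0, a₄ := b, a₆ := 0 }

open Classical in
/-- Let `K` be a field with `char K ∉ {2,3}`, `a, b ∈ K` with `b ≠ 0` and
`a² ≠ 4b`, so `E : y² = x(x² + ax + b)` is an elliptic curve.  If `Q = (u,v) ∈ E(K)`
satisfies `2Q = (0,0)`, then `u ≠ 0`, `v ≠ 0`, and with `e := v/u`, `f := u` one has
`a = e² − 2f`, `b = f²` and `Q = (f, ef)` (so `E = E_{e,f}`); moreover `Q` has exact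
order `4`. -/
theorem stmt2 {K : Type*} [Field K] (h2 : (2 : K) ≠ 0) (h3 : (3 : K) ≠ 0)
    (a b u v : K) (hb : b ≠ 0) (hab : a ^ 2 ≠ 4 * b)
    (hQ : (Wab a b).toAffine.Nonsingular u v)
    (h2Q : ∃ h0 : (Wab a b).toAffine.Nonsingular 0 0,
      2 • (Affine.Point.some _ _ hQ) = Affine.Point.some _ _ h0) :
    u ≠ 0 ∧ v ≠ 0 ∧
    a = (v / u) ^ 2 - 2 * u ∧ b = u ^ 2 ∧ v = (v / u) * u ∧
    Wab a b = Wab ((v / u) ^ 2 - 2 * u) (u ^ 2) ∧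
    addOrderOf (Affine.Point.some _ _ hQ) = 4 := by
  obtain ⟨h0, hadd⟩ := h2Q
  rw [two_smul] at hadd
  -- v ≠ 0
  have hv : v ≠ 0 := by
    intro h
    have hy : v = (Wab a b).toAffine.negY u v := by simp [Wab, Affine.negY, h]
    rw [Affine.Point.add_self_of_Y_eq hy] at hadd
    exact Affine.Point.some_ne_zero h0 hadd.symm
  have hv' : v ≠ (Wab a b).toAffine.negY u v := by
    simp only [Wab, Affine.negY]
    intro h
    apply hv
    have h2v : 2 * v = 0 := by linear_combination h
    exact (mul_eq_zero.mp h2v).resolve_left h2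
  rw [Affine.Point.add_self_of_Y_ne hv'] at hadd
  set L := (Wab a b).toAffine.slope u u v v with hLdef
  have hinj : (Wab a b).toAffine.addX u u L = 0 ∧
      (Wab a b).toAffine.addY u u v L = 0 := by
    have h' := hadd
    rw [Affine.Point.some.injEq] at h'
    exact ⟨h'.1, h'.2⟩
  have hX : L ^ 2 - a - 2 * u = 0 := by
    have h' := hinj.1
    simp only [Affine.addX, Wab] at h'
    linear_combination h'
  have hY : L * u - v = 0 := by
    have h' := hinj.2
    simp only [Affine.addY, Affine.negAddY, Affine.addX, Affine.negY, Wab] at h'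
    linear_combination h' + L * hX
  have heq : v ^ 2 = u ^ 3 + a * u ^ 2 + b * u := by
    have h' := ((Wab a b).toAffine.equation_iff u v).mp hQ.1
    simp only [Wab] at h'
    linear_combination h'
  have hu : u ≠ 0 := by
    intro h
    apply hv
    have hv2 : v ^ 2 = 0 := by rw [heq, h]; ring
    exact pow_eq_zero_iff (by norm_num) |>.mp hv2
  have hLval : L = v / u := by
    rw [eq_div_iff hu]
    linear_combination hY
  have ha : a = (v / u) ^ 2 - 2 * u := by
    linear_combination (L + v / u) * hLval - hX
  have hbu : b * u = u ^ 2 * u := by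
    linear_combination -heq + u ^ 2 * hX - (v + L * u) * hY
  have hbval : b = u ^ 2 := mul_right_cancel₀ hu hbu
  refine ⟨hu, hv, ha, hbval, (div_mul_cancel₀ v hu).symm, by rw [← ha, ← hbval], ?_⟩
  haveI : Fact (Nat.Prime 2) := ⟨Nat.prime_two⟩
  have h2P : 2 • (Affine.Point.some _ _ hQ) = Affine.Point.some _ _ h0 := by
    rw [two_smul, Affine.Point.add_self_of_Y_ne hv']; exact hadd
  have h4 : (2 : ℕ) ^ 2 • (Affine.Point.some _ _ hQ) = 0 := by
    have h22 : (2 : ℕ) ^ 2 = 2 * 2 := by norm_num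
    rw [h22, mul_smul, h2P, two_smul]
    exact Affine.Point.add_self_of_Y_eq (by simp [Wab, Affine.negY])
  have hne : ¬ (2 : ℕ) ^ 1 • (Affine.Point.some _ _ hQ) = 0 := by
    rw [pow_one, h2P]
    exact Affine.Point.some_ne_zero h0
  have hord := addOrderOf_eq_prime_pow (p := 2) (n := 1) hne h4
  norm_num at hord
  exact hord
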